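/- Let E = EuclideanSpace ℝ (Fin n), let κ : E → E be locally Lipschitz, let x_d ∈ E, and assume ⟪y − x_d, κ(y)⟫ ≤ 0 for every y ∈ E. Let x : ℝ → E be differentiable with x'(t) = κ(x(t)) for all t ≥ 0. If p ∈ E is a cluster point of the trajectory at infinity, i.e. there is a sequence tₘ → ∞ with x(tₘ) → p, then ⟪p − x_d, κ(p)⟫ = 0. -/

import Mathlib

open scoped RealInnerProductSpace

open Set Filter Metric in
lemma stay_in_ball {E : Type*} [NormedAddCommGroup E] [NormedSpace ℝ E]
    (x : ℝ → E) (κ : E → E) (hx : ∀ t ∈ Set.Ici (0:ℝ), HasDerivAt x (κ (x t)) t)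
    (p : E) (R M δ : ℝ) (hR : 0 < R) (hM : 0 < M)
    (hbound : ∀ y ∈ Metric.closedBall p R, ‖κ y‖ ≤ M)
    (hδ : δ = R / (2 * M))
    (s : ℝ) (hs : 0 ≤ s) (hsx : ‖x s - p‖ ≤ R / 2) :
    ∀ u ∈ Set.Icc s (s + δ), ‖x u - p‖ ≤ R := by
  have hδ0 : 0 < δ := by rw [hδ]; positivity
  set A := {u ∈ Set.Icc s (s + δ) | ∀ v ∈ Set.Icc s u, ‖x v - p‖ ≤ R} with hA
  have hsA : s ∈ A := by
    refine ⟨⟨le_refl s, by linarith⟩, fun v hv => ?_⟩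
    have hv' : v = s := le_antisymm hv.2 hv.1
    rw [hv']; linarith
  have hbdd : BddAbove A := ⟨s + δ, fun u hu => hu.1.2⟩
  set T := sSup A with hT
  have hsT : s ≤ T := le_csSup hbdd hsA
  have hTle : T ≤ s + δ := csSup_le ⟨s, hsA⟩ (fun u hu => hu.1.2)
  have hT0 : (0:ℝ) ≤ T := le_trans hs hsT
  have key : ∀ v ∈ Set.Icc s T, ‖x v - p‖ ≤ R := by
    have keyIco : ∀ v ∈ Set.Ico s T, ‖x v - p‖ ≤ R := by
      intro v hv
      obtain ⟨u, huA, hvu⟩ := exists_lt_of_lt_csSup ⟨s, hsA⟩ hv.2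
      exact huA.2 v ⟨hv.1, le_of_lt hvu⟩
    intro v hv
    rcases lt_or_eq_of_le hv.2 with hvT | hvT
    · exact keyIco v ⟨hv.1, hvT⟩
    · rw [hvT]
      rcases eq_or_lt_of_le hsT with hsT' | hsT'
      · rw [← hsT']; linarith
      · have hcont : ContinuousAt (fun w => ‖x w - p‖) T :=
          (((hx T hT0).continuousAt).sub continuousAt_const).norm
        haveI hne : (nhdsWithin T (Set.Ico s T)).NeBot := by
          rw [← mem_closure_iff_nhdsWithin_neBot, closure_Ico (ne_of_lt hsT')]
          exact ⟨le_of_lt hsT', le_refl T⟩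
        refine le_of_tendsto ((hcont.continuousWithinAt (s := Set.Ico s T)).tendsto) ?_
        filter_upwards [self_mem_nhdsWithin] with w hw
        exact keyIco w hw
  have hTA : T ∈ A := ⟨⟨hsT, hTle⟩, key⟩
  have hTeq : T = s + δ := by
    by_contra hne'
    have hTlt : T < s + δ := lt_of_le_of_ne hTle hne'
    have hmv : ∀ v ∈ Set.Icc s T, ‖x v - x s‖ ≤ M * (v - s) := by
      refine norm_image_sub_le_of_norm_deriv_le_segment'
        (fun v hv => ((hx v (le_trans hs hv.1)).hasDerivWithinAt)) (fun v hv => ?_)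
      refine hbound _ ?_
      rw [Metric.mem_closedBall, dist_eq_norm]
      exact key v ⟨hv.1, le_of_lt hv.2⟩
    have hMδ : M * δ = R / 2 := by rw [hδ]; field_simp
    have hxT : ‖x T - p‖ < R := by
      have h1 : ‖x T - p‖ ≤ ‖x T - x s‖ + ‖x s - p‖ := by
        simpa [dist_eq_norm] using dist_triangle (x T) (x s) p
      have h2 : ‖x T - x s‖ ≤ M * (T - s) := hmv T ⟨hsT, le_refl T⟩
      nlinarith [mul_lt_mul_of_pos_left (show T - s < δ by linarith) hM]
    have hev : ∀ᶠ w in nhds T, ‖x w - p‖ < R := by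
      have hc : ContinuousAt (fun w => ‖x w - p‖) T :=
        (((hx T hT0).continuousAt).sub continuousAt_const).norm
      exact hc.tendsto.eventually_lt_const hxT
    rw [Metric.eventually_nhds_iff] at hev
    obtain ⟨ε, hε, hball⟩ := hev
    set T' := min (s + δ) (T + ε / 2) with hT'
    have hTT' : T < T' := lt_min hTlt (by linarith)
    have hT'A : T' ∈ A := by
      refine ⟨⟨le_trans hsT (le_of_lt hTT'), min_le_left _ _⟩, fun v hv => ?_⟩
      rcases le_or_gt v T with hvT | hvT
      · exact key v ⟨hv.1, hvT⟩
      · refine le_of_lt (hball ?_)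
        have hvT' : v ≤ T + ε / 2 := le_trans hv.2 (min_le_right _ _)
        rw [Real.dist_eq, abs_of_pos (by linarith)]
        linarith
    have : T' ≤ T := le_csSup hbdd hT'A
    linarith
  intro u hu
  rw [hTeq] at hTA
  exact hTA.2 u hu

/-- LaSalle-type convergence step of Theorem 2. If `κ` is locally
Lipschitz and satisfies the descent inequality `⟪y − x_d, κ(y)⟫ ≤ 0`, and `x`
is a trajectory of `ẋ = κ(x)` on `[0, ∞)`, then any cluster point `p` of the
trajectory at infinity satisfies `⟪p − x_d, κ(p)⟫ = 0`. -/
theorem omega_limit_point_stationary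
    (n : ℕ)
    (κ : EuclideanSpace ℝ (Fin n) → EuclideanSpace ℝ (Fin n))
    (hκ : LocallyLipschitz κ)
    (xd : EuclideanSpace ℝ (Fin n))
    (hdescent : ∀ y : EuclideanSpace ℝ (Fin n), ⟪y - xd, κ y⟫ ≤ 0)
    (x : ℝ → EuclideanSpace ℝ (Fin n))
    (hx : ∀ t ∈ Set.Ici (0 : ℝ), HasDerivAt x (κ (x t)) t)
    (p : EuclideanSpace ℝ (Fin n))
    (t : ℕ → ℝ)
    (ht : Filter.Tendsto t Filter.atTop Filter.atTop)
    (hconv : Filter.Tendsto (fun m => x (t m)) Filter.atTop (nhds p)) :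
    ⟪p - xd, κ p⟫ = 0 := by
  set c := ⟪p - xd, κ p⟫ with hc
  rcases lt_or_eq_of_le (hdescent p) with hclt | hceq
  swap
  · exact hceq
  exfalso
  -- the Lyapunov function along the trajectory
  set g : ℝ → ℝ := fun τ => ⟪x τ - xd, x τ - xd⟫ with hg
  have hgderiv : ∀ τ ∈ Set.Ici (0:ℝ), HasDerivAt g (2 * ⟪x τ - xd, κ (x τ)⟫) τ := by
    intro τ hτ
    have hd : HasDerivAt (fun τ => x τ - xd) (κ (x τ)) τ := (hx τ hτ).sub_const xd
    have := hd.inner ℝ hd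
    have h2 := this.congr_deriv
      (show _ = 2 * ⟪x τ - xd, κ (x τ)⟫ by rw [real_inner_comm (x τ - xd) (κ (x τ))]; ring)
    exact h2
  -- g is antitone on [0, ∞)
  have hganti : AntitoneOn g (Set.Ici (0:ℝ)) := by
    refine antitoneOn_of_hasDerivWithinAt_nonpos (convex_Ici 0)
      (fun τ hτ => (hgderiv τ hτ).continuousAt.continuousWithinAt)
      (f' := fun τ => 2 * ⟪x τ - xd, κ (x τ)⟫) (fun τ hτ => ?_) (fun τ hτ => ?_)
    · exact ((hgderiv τ (le_of_lt (by simpa using hτ))).hasDerivWithinAt)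
    · have := hdescent (x τ); show 2 * ⟪x τ - xd, κ (x τ)⟫ ≤ 0; linarith
  set gp : ℝ := ⟪p - xd, p - xd⟫ with hgp
  have hgt : Filter.Tendsto (fun m => g (t m)) Filter.atTop (nhds gp) := by
    have h1 : Filter.Tendsto (fun m => x (t m) - xd) Filter.atTop (nhds (p - xd)) :=
      hconv.sub tendsto_const_nhds
    exact h1.inner h1
  -- g is bounded below by gp on [0, ∞)
  have hge : ∀ τ ∈ Set.Ici (0:ℝ), gp ≤ g τ := by
    intro τ hτ
    refine le_of_tendsto hgt ?_
    filter_upwards [ht.eventually_ge_atTop τ, ht.eventually_ge_atTop 0] with m h1 h2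
    exact hganti hτ h2 h1
  -- continuity gives a ball where the derivative is ≤ c/2 < 0
  have hh : Continuous fun y : EuclideanSpace ℝ (Fin n) => ⟪y - xd, κ y⟫ :=
    (continuous_id.sub continuous_const).inner hκ.continuous
  have hev : ∀ᶠ y in nhds p, ⟪y - xd, κ y⟫ < c / 2 :=
    (hh.tendsto p).eventually_lt_const (by linarith)
  rw [Metric.eventually_nhds_iff] at hev
  obtain ⟨r, hr0, hrball⟩ := hev
  set R := r / 2 with hR
  have hR0 : 0 < R := by positivity
  -- bound on κ near p
  obtain ⟨M, hMbound⟩ := (isCompact_closedBall p R).exists_bound_of_continuousOn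
    hκ.continuous.continuousOn
  set M' := M + 1 with hM'
  have hM'0 : 0 < M' := by
    have := le_trans (norm_nonneg (κ p)) (hMbound p (Metric.mem_closedBall_self (le_of_lt hR0)))
    linarith
  have hMbound' : ∀ y ∈ Metric.closedBall p R, ‖κ y‖ ≤ M' :=
    fun y hy => le_trans (hMbound y hy) (by linarith)
  set δ := R / (2 * M') with hδ
  have hδ0 : 0 < δ := by positivity
  -- main decrease estimate
  have hdec : ∀ s : ℝ, 0 ≤ s → ‖x s - p‖ ≤ R / 2 → g (s + δ) ≤ g s + c * δ := by
    intro s hs hsx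
    have hstay := stay_in_ball x κ hx p R M' δ hR0 hM'0 hMbound' hδ s hs hsx
    -- on [s, s+δ], the derivative of g is ≤ c
    have hFanti : AntitoneOn (fun u => g u - c * u) (Set.Icc s (s + δ)) := by
      have hin : ∀ u ∈ Set.Icc s (s + δ), (0:ℝ) ≤ u := fun u hu => le_trans hs hu.1
      refine antitoneOn_of_hasDerivWithinAt_nonpos (convex_Icc s (s + δ))
        (fun u hu => (((hgderiv u (hin u hu)).sub ((hasDerivAt_id u).const_mul
          c)).continuousAt.continuousWithinAt))
        (f' := fun u => 2 * ⟪x u - xd, κ (x u)⟫ - c) (fun u hu => ?_) (fun u hu => ?_)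
      · have hu' := interior_subset hu
        exact (((hgderiv u (hin u hu')).sub (((hasDerivAt_id u).const_mul
          c))).hasDerivWithinAt).congr_deriv (by ring)
      · have hu' := interior_subset hu
        have hxu : x u ∈ Metric.ball p r := by
          have := hstay u hu'
          rw [Metric.mem_ball, dist_eq_norm]
          calc ‖x u - p‖ ≤ R := this
          _ < r := by rw [hR]; linarith
        have := hrball (by simpa [dist_eq_norm] using hxu)
        show 2 * ⟪x u - xd, κ (x u)⟫ - c ≤ 0
        linarith
    have := hFanti (Set.left_mem_Icc.2 (by linarith)) (Set.right_mem_Icc.2 (by linarith))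
      (by linarith)
    simp only at this
    linarith [this]
  -- eventually x (t m) is close to p, producing values of g below gp
  have hfinal : gp - c * δ ≤ gp := by
    refine ge_of_tendsto hgt ?_
    have hclose : ∀ᶠ m in Filter.atTop, ‖x (t m) - p‖ ≤ R / 2 := by
      have := hconv.eventually (Metric.closedBall_mem_nhds p (show (0:ℝ) < R/2 by positivity))
      filter_upwards [this] with m hm
      simpa [Metric.mem_closedBall, dist_eq_norm] using hm
    filter_upwards [hclose, ht.eventually_ge_atTop 0] with m hm1 hm2
    have h1 := hdec (t m) hm2 hm1
    have h2 := hge (t m + δ) (by simp only [Set.mem_Ici]; linarith)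
    linarith
  nlinarith
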